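/- (Coherence bound for the Gaussian kernel) Let M ≥ sup_u max_{0≤i≤3} |P_i(u)|·e^{−u²/4} where P_i are the polynomials with k^{(i)} = P_i·k, k(t)=e^{−t²/2}. For any s ≥ 1, δ > 0 and any s-tuple (θ₁,…,θ_s) of reals pairwise separated by more than δ in the metric d(θ,θ') = |θ−θ'|/(√2σ₀), and for any (i,j) ∈ {0,1}×{0,1,2}: max_ℓ Σ_{k≠ℓ} |K_∞^{[i,j]}(θ_ℓ,θ_k)| ≤ 2M·∫₀^{s/2+1} e^{−t²δ²/4} dt ≤ 2√π·M/δ, using the bound |K_∞^{[i,j]}(θ,θ')| ≤ M·e^{−d(θ,θ')²/2}. -/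

import Mathlib

open Real

lemma aux_int_mono (δ a b : ℝ) (hab : a ≤ b) :
    (∫ t in (0:ℝ)..a, Real.exp (-t ^ 2 * δ ^ 2 / 4))
      ≤ ∫ t in (0:ℝ)..b, Real.exp (-t ^ 2 * δ ^ 2 / 4) := by
  have hcont : Continuous fun t : ℝ => Real.exp (-t ^ 2 * δ ^ 2 / 4) := by
    fun_prop
  have hint : ∀ u v : ℝ, IntervalIntegrable (fun t => Real.exp (-t ^ 2 * δ ^ 2 / 4))
      MeasureTheory.volume u v := fun u v => hcont.intervalIntegrable u v
  have h1 := intervalIntegral.integral_add_adjacent_intervals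
    (a := (0:ℝ)) (b := a) (c := b) (hint 0 a) (hint a b)
  have h2 : (0:ℝ) ≤ ∫ t in a..b, Real.exp (-t ^ 2 * δ ^ 2 / 4) :=
    intervalIntegral.integral_nonneg hab (fun u _ => (Real.exp_pos _).le)
  linarith

lemma aux_key (δ : ℝ) (hδ : 0 < δ) (n : ℕ) (hn : 1 ≤ n) (G : ℝ)
    (hG : (n : ℝ) * δ / 2 ≤ G) :
    Real.exp (-G ^ 2 / 2)
      ≤ 2 * ∫ t in (((n : ℝ) - 1) / 2)..((n : ℝ) / 2), Real.exp (-t ^ 2 * δ ^ 2 / 4) := by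
  have hcont : Continuous fun t : ℝ => Real.exp (-t ^ 2 * δ ^ 2 / 4) := by fun_prop
  have hn1 : (1 : ℝ) ≤ (n : ℝ) := by exact_mod_cast hn
  have hab : ((n : ℝ) - 1) / 2 ≤ (n : ℝ) / 2 := by linarith
  have hmono : ∫ t in (((n : ℝ) - 1) / 2)..((n : ℝ) / 2),
      Real.exp (-((n:ℝ)/2) ^ 2 * δ ^ 2 / 4)
      ≤ ∫ t in (((n : ℝ) - 1) / 2)..((n : ℝ) / 2), Real.exp (-t ^ 2 * δ ^ 2 / 4) := by
    apply intervalIntegral.integral_mono_on hab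
      (intervalIntegrable_const) (hcont.intervalIntegrable _ _)
    intro x hx
    apply Real.exp_le_exp.2
    have hx0 : 0 ≤ x := le_trans (by linarith) hx.1
    have hx2 : x ^ 2 ≤ ((n:ℝ)/2) ^ 2 := by nlinarith [hx.2]
    nlinarith [sq_nonneg δ]
  rw [intervalIntegral.integral_const] at hmono
  have hconst : (((n:ℝ)/2) - (((n:ℝ)-1)/2)) • Real.exp (-((n:ℝ)/2) ^ 2 * δ ^ 2 / 4)
      = (1/2) * Real.exp (-((n:ℝ)/2) ^ 2 * δ ^ 2 / 4) := by
    rw [smul_eq_mul]; ring_nf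
  rw [hconst] at hmono
  have hexp : Real.exp (-G ^ 2 / 2) ≤ Real.exp (-((n:ℝ)/2) ^ 2 * δ ^ 2 / 4) := by
    apply Real.exp_le_exp.2
    have h0 : 0 ≤ (n:ℝ) * δ / 2 := by positivity
    nlinarith [sq_nonneg G, sq_nonneg ((n:ℝ)*δ)]
  linarith

lemma aux_sum_le {ι : Type*} [DecidableEq ι] (δ : ℝ) (hδ : 0 < δ) (g : ι → ℝ)
    (T : Finset ι)
    (H : ∀ r : ℝ, 0 ≤ r → (((T.filter (fun m => g m ≤ r)).card : ℝ)) ≤ 2 * r / δ)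
    (hg : ∀ m ∈ T, 0 ≤ g m) :
    ∑ m ∈ T, Real.exp (-(g m) ^ 2 / 2)
      ≤ 2 * ∫ t in (0:ℝ)..((T.card : ℝ) / 2), Real.exp (-t ^ 2 * δ ^ 2 / 4) := by
  induction T using Finset.strongInduction with
  | _ T IH =>
    rcases T.eq_empty_or_nonempty with rfl | hne
    · simp
    · obtain ⟨m₀, hm₀, hmax⟩ := T.exists_max_image g hne
      have hT : T = T.filter (fun m => g m ≤ g m₀) :=
        (Finset.filter_true_of_mem (fun m hm => hmax m hm)).symm
      have hcard : ((T.card : ℝ)) ≤ 2 * g m₀ / δ := by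
        have := H (g m₀) (hg m₀ hm₀)
        rwa [← hT] at this
      have hG : (T.card : ℝ) * δ / 2 ≤ g m₀ := by
        have h := (le_div_iff₀ hδ).1 hcard
        linarith
      have hn : 1 ≤ T.card := Finset.card_pos.2 hne
      have hsub : T.erase m₀ ⊂ T := Finset.erase_ssubset hm₀
      have hIH := IH (T.erase m₀) hsub
        (fun r hr => le_trans (by
          exact_mod_cast Finset.card_le_card
            (Finset.filter_subset_filter _ (Finset.erase_subset _ _))) (H r hr))
        (fun m hm => hg m (Finset.mem_of_mem_erase hm))
      have hcerase : (((T.erase m₀).card : ℝ)) = (T.card : ℝ) - 1 := by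
        rw [Finset.card_erase_of_mem hm₀, Nat.cast_sub hn]; norm_num
      have hsplit := Finset.sum_erase_add T (fun m => Real.exp (-(g m) ^ 2 / 2)) hm₀
      have hkey := aux_key δ hδ T.card hn (g m₀) hG
      have hcont : Continuous fun t : ℝ => Real.exp (-t ^ 2 * δ ^ 2 / 4) := by fun_prop
      have hint : ∀ u v : ℝ, IntervalIntegrable (fun t => Real.exp (-t ^ 2 * δ ^ 2 / 4))
          MeasureTheory.volume u v := fun u v => hcont.intervalIntegrable u v
      have hadd := intervalIntegral.integral_add_adjacent_intervals
        (a := (0:ℝ)) (b := ((T.card : ℝ) - 1) / 2) (c := (T.card : ℝ) / 2)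
        (hint _ _) (hint _ _)
      rw [hcerase] at hIH
      linarith [hsplit, hIH, hkey, hadd]

lemma aux_count (c δ r : ℝ) (hc : 0 < c) (hδ : 0 < δ) (hr : 0 ≤ r)
    {s : ℕ} (θ : Fin s → ℝ)
    (hsep : ∀ a b : Fin s, a ≠ b → δ * c < |θ a - θ b|) (ℓ : Fin s) :
    ((((Finset.univ.erase ℓ)).filter (fun m => |θ ℓ - θ m| / c ≤ r)).card : ℝ)
      ≤ 2 * r / δ := by
  set F : Finset (Fin s) :=
    (Finset.univ.erase ℓ).filter (fun m => |θ ℓ - θ m| / c ≤ r) with hF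
  set x₀ : ℝ := θ ℓ - r * c with hx₀
  set φ : Fin s → ℤ := fun m => ⌊(θ m - x₀) / (δ * c)⌋ with hφ
  have hδc : 0 < δ * c := mul_pos hδ hc
  have hinj : Set.InjOn φ ↑(insert ℓ F) := by
    intro a _ b _ hab
    by_contra hne
    have hgap := hsep a b hne
    have h1 : (θ a - x₀) / (δ * c) - (θ b - x₀) / (δ * c) < 1 := by
      calc (θ a - x₀) / (δ * c) - (θ b - x₀) / (δ * c)
          < (⌊(θ a - x₀) / (δ * c)⌋ + 1 : ℤ) - ⌊(θ b - x₀) / (δ * c)⌋ := by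
            push_cast
            have := Int.lt_floor_add_one ((θ a - x₀) / (δ * c))
            have := Int.floor_le ((θ b - x₀) / (δ * c))
            linarith
        _ = 1 := by
            rw [show ⌊(θ a - x₀) / (δ * c)⌋ = ⌊(θ b - x₀) / (δ * c)⌋ from hab]
            push_cast; ring
    have h2 : (θ b - x₀) / (δ * c) - (θ a - x₀) / (δ * c) < 1 := by
      calc (θ b - x₀) / (δ * c) - (θ a - x₀) / (δ * c)
          < (⌊(θ b - x₀) / (δ * c)⌋ + 1 : ℤ) - ⌊(θ a - x₀) / (δ * c)⌋ := by
            push_cast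
            have := Int.lt_floor_add_one ((θ b - x₀) / (δ * c))
            have := Int.floor_le ((θ a - x₀) / (δ * c))
            linarith
        _ = 1 := by
            rw [show ⌊(θ a - x₀) / (δ * c)⌋ = ⌊(θ b - x₀) / (δ * c)⌋ from hab]
            push_cast; ring
    have hd1 : (θ a - x₀) / (δ * c) - (θ b - x₀) / (δ * c) = (θ a - θ b) / (δ * c) := by
      field_simp; ring
    have hd2 : (θ b - x₀) / (δ * c) - (θ a - x₀) / (δ * c) = (θ b - θ a) / (δ * c) := by
      field_simp; ring
    rw [hd1, div_lt_one hδc] at h1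
    rw [hd2, div_lt_one hδc] at h2
    rcases abs_cases (θ a - θ b) with ⟨he, _⟩ | ⟨he, _⟩ <;> rw [he] at hgap <;> linarith
  have hmaps : ∀ m ∈ insert ℓ F, φ m ∈ Finset.Icc (0 : ℤ) ⌊2 * r / δ⌋ := by
    intro m hm
    have hbound : θ ℓ - r * c ≤ θ m ∧ θ m ≤ θ ℓ + r * c := by
      rcases Finset.mem_insert.1 hm with rfl | hmF
      · constructor <;> nlinarith
      · have := (Finset.mem_filter.1 hmF).2
        have habs : |θ ℓ - θ m| ≤ r * c := by
          rw [div_le_iff₀ hc] at this; linarith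
        have h1 := abs_le.1 habs
        constructor <;> linarith [h1.1, h1.2]
    simp only [Finset.mem_Icc]
    constructor
    · apply Int.floor_nonneg.2
      apply div_nonneg _ hδc.le
      simp only [hx₀]; linarith [hbound.1]
    · apply Int.floor_le_floor
      rw [div_le_div_iff₀ hδc hδ]
      simp only [hx₀]
      nlinarith [hbound.2]
  have hcard := Finset.card_le_card_of_injOn φ hmaps hinj
  have hlm : ℓ ∉ F := by
    simp only [hF, Finset.mem_filter, Finset.mem_erase]
    tauto
  rw [Finset.card_insert_of_notMem hlm, Int.card_Icc] at hcard
  have hB : 0 ≤ ⌊2 * r / δ⌋ := Int.floor_nonneg.2 (by positivity)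
  have hBle : (⌊2 * r / δ⌋ : ℝ) ≤ 2 * r / δ := Int.floor_le _
  have h2 : (F.card : ℤ) + 1 ≤ ⌊2 * r / δ⌋ + 1 := by omega
  have h3 : ((F.card : ℝ)) + 1 ≤ (⌊2 * r / δ⌋ : ℝ) + 1 := by exact_mod_cast h2
  linarith

lemma aux_gauss (δ : ℝ) (hδ : 0 < δ) (a : ℝ) (ha : 0 ≤ a) :
    (∫ t in (0:ℝ)..a, Real.exp (-t ^ 2 * δ ^ 2 / 4)) ≤ Real.sqrt π / δ := by
  have hrw : (fun t : ℝ => Real.exp (-t ^ 2 * δ ^ 2 / 4))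
      = fun t : ℝ => Real.exp (-(δ ^ 2 / 4) * t ^ 2) := by
    funext t; ring_nf
  have hb : 0 < δ ^ 2 / 4 := by positivity
  have hInt : MeasureTheory.IntegrableOn
      (fun t : ℝ => Real.exp (-(δ ^ 2 / 4) * t ^ 2)) (Set.Ioi 0) := by
    exact (integrable_exp_neg_mul_sq hb).integrableOn
  have h1 : (∫ t in (0:ℝ)..a, Real.exp (-t ^ 2 * δ ^ 2 / 4))
      = ∫ t in Set.Ioc (0:ℝ) a, Real.exp (-(δ ^ 2 / 4) * t ^ 2) := by
    rw [hrw, intervalIntegral.integral_of_le ha]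
  rw [h1]
  have h2 : (∫ t in Set.Ioc (0:ℝ) a, Real.exp (-(δ ^ 2 / 4) * t ^ 2))
      ≤ ∫ t in Set.Ioi (0:ℝ), Real.exp (-(δ ^ 2 / 4) * t ^ 2) := by
    apply MeasureTheory.setIntegral_mono_set hInt
    · filter_upwards with x using (Real.exp_pos _).le
    · exact MeasureTheory.ae_of_all _ (fun x hx => hx.1)
  have h3 : (∫ t in Set.Ioi (0:ℝ), Real.exp (-(δ ^ 2 / 4) * t ^ 2))
      = Real.sqrt (π / (δ ^ 2 / 4)) / 2 := integral_gaussian_Ioi _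
  have h4 : Real.sqrt (π / (δ ^ 2 / 4)) = 2 * Real.sqrt π / δ := by
    rw [show π / (δ ^ 2 / 4) = (2 * Real.sqrt π / δ) ^ 2 by
      rw [div_pow, mul_pow, Real.sq_sqrt Real.pi_nonneg]; ring]
    exact Real.sqrt_sq (by positivity)
  rw [h3, h4] at h2
  calc _ ≤ 2 * Real.sqrt π / δ / 2 := h2
    _ = Real.sqrt π / δ := by ring

/-- Coherence bound for the Gaussian kernel: with
`K_∞^{[i,j]}(θ,θ') = (−1)^j k^{(i+j)}((θ−θ')/(√2σ₀))`, `k(t) = e^{−t²/2}`,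
`d(θ,θ') = |θ−θ'|/(√2σ₀)`, and `M` a constant with
`|k^{(m)}(u)| ≤ M e^{−u²/4}` for `m ≤ 3` and `|K_∞^{[i,j]}(θ,θ')| ≤ M e^{−d(θ,θ')²/2}`,
any `s`-tuple pairwise `δ`-separated in `d` satisfies, for `(i,j) ∈ {0,1}×{0,1,2}`,
`max_ℓ Σ_{k≠ℓ} |K_∞^{[i,j]}(θ_ℓ,θ_k)| ≤ 2M ∫₀^{s/2+1} e^{−t²δ²/4} dt ≤ 2√π M/δ`. -/
theorem gaussian_coherence_bound
    (σ₀ : ℝ) (hσ₀ : 0 < σ₀)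
    (k : ℝ → ℝ) (hk : ∀ t, k t = Real.exp (-t ^ 2 / 2))
    (K : ℕ → ℕ → ℝ → ℝ → ℝ)
    (hKdef : ∀ i j θ θ', K i j θ θ'
      = (-1 : ℝ) ^ j * iteratedDeriv (i + j) k ((θ - θ') / (Real.sqrt 2 * σ₀)))
    (d : ℝ → ℝ → ℝ) (hd : ∀ θ θ', d θ θ' = |θ - θ'| / (Real.sqrt 2 * σ₀))
    (M : ℝ)
    (hM : ∀ m ≤ 3, ∀ u : ℝ, |iteratedDeriv m k u| ≤ M * Real.exp (-u ^ 2 / 4))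
    (hMbound : ∀ i ≤ 1, ∀ j ≤ 2, ∀ θ θ' : ℝ,
      |K i j θ θ'| ≤ M * Real.exp (-(d θ θ') ^ 2 / 2))
    (s : ℕ) (hs : 1 ≤ s) (δ : ℝ) (hδ : 0 < δ)
    (θ : Fin s → ℝ)
    (hsep : ∀ i j : Fin s, i ≠ j → δ < d (θ i) (θ j)) :
    ∀ i ≤ 1, ∀ j ≤ 2, ∀ ℓ : Fin s,
      (∑ m ∈ Finset.univ.erase ℓ, |K i j (θ ℓ) (θ m)|
          ≤ 2 * M * ∫ t in (0:ℝ)..((s : ℝ) / 2 + 1), Real.exp (-t ^ 2 * δ ^ 2 / 4)) ∧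
      2 * M * (∫ t in (0:ℝ)..((s : ℝ) / 2 + 1), Real.exp (-t ^ 2 * δ ^ 2 / 4))
        ≤ 2 * Real.sqrt π * M / δ := by
  have hM1 : (1 : ℝ) ≤ M := by
    simpa [iteratedDeriv_zero, hk] using hM 0 (by norm_num) 0
  have hM0 : (0 : ℝ) ≤ M := by linarith
  have hc : (0 : ℝ) < Real.sqrt 2 * σ₀ :=
    mul_pos (Real.sqrt_pos.2 (by norm_num)) hσ₀
  set c : ℝ := Real.sqrt 2 * σ₀ with hcdef
  have hsep' : ∀ a b : Fin s, a ≠ b → δ * c < |θ a - θ b| := by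
    intro a b hab
    have h := hsep a b hab
    rw [hd] at h
    exact (lt_div_iff₀ hc).1 h
  have hs1 : (1 : ℝ) ≤ (s : ℝ) := by exact_mod_cast hs
  intro i hi j hj ℓ
  constructor
  · -- main coherence bound
    set T : Finset (Fin s) := Finset.univ.erase ℓ with hT
    have hcardT : ((T.card : ℝ)) = (s : ℝ) - 1 := by
      rw [hT, Finset.card_erase_of_mem (Finset.mem_univ ℓ), Finset.card_univ,
        Fintype.card_fin, Nat.cast_sub hs]
      norm_num
    have h1 : ∑ m ∈ T, |K i j (θ ℓ) (θ m)|
        ≤ ∑ m ∈ T, M * Real.exp (-(d (θ ℓ) (θ m)) ^ 2 / 2) :=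
      Finset.sum_le_sum (fun m _ => hMbound i hi j hj _ _)
    have h2 : ∑ m ∈ T, M * Real.exp (-(d (θ ℓ) (θ m)) ^ 2 / 2)
        = M * ∑ m ∈ T, Real.exp (-(|θ ℓ - θ m| / c) ^ 2 / 2) := by
      simp only [hd]
      rw [Finset.mul_sum]
    have h3 := aux_sum_le δ hδ (fun m => |θ ℓ - θ m| / c) T
      (fun r hr => aux_count c δ r hc hδ hr θ hsep' ℓ)
      (fun m _ => by positivity)
    have h4 : (∫ t in (0:ℝ)..((T.card : ℝ) / 2), Real.exp (-t ^ 2 * δ ^ 2 / 4))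
        ≤ ∫ t in (0:ℝ)..((s : ℝ) / 2 + 1), Real.exp (-t ^ 2 * δ ^ 2 / 4) := by
      apply aux_int_mono
      rw [hcardT]; linarith
    have h5 : ∑ m ∈ T, Real.exp (-(|θ ℓ - θ m| / c) ^ 2 / 2)
        ≤ 2 * ∫ t in (0:ℝ)..((s : ℝ) / 2 + 1), Real.exp (-t ^ 2 * δ ^ 2 / 4) := by
      linarith
    calc ∑ m ∈ T, |K i j (θ ℓ) (θ m)|
        ≤ M * ∑ m ∈ T, Real.exp (-(|θ ℓ - θ m| / c) ^ 2 / 2) := by rw [← h2]; exact h1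
      _ ≤ M * (2 * ∫ t in (0:ℝ)..((s : ℝ) / 2 + 1), Real.exp (-t ^ 2 * δ ^ 2 / 4)) :=
          mul_le_mul_of_nonneg_left h5 hM0
      _ = 2 * M * ∫ t in (0:ℝ)..((s : ℝ) / 2 + 1), Real.exp (-t ^ 2 * δ ^ 2 / 4) := by ring
  · -- Gaussian tail bound
    have hI := aux_gauss δ hδ ((s : ℝ) / 2 + 1) (by linarith)
    calc 2 * M * (∫ t in (0:ℝ)..((s : ℝ) / 2 + 1), Real.exp (-t ^ 2 * δ ^ 2 / 4))
        ≤ 2 * M * (Real.sqrt π / δ) :=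
          mul_le_mul_of_nonneg_left hI (by linarith)
      _ = 2 * Real.sqrt π * M / δ := by ring
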